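/- Let L > 1 and define N(ε) = ∫_{−π/2}^{π/2} (u_{ε,L}'(x))² dx for ε ∈ (0,1], where u_{ε,L}' denotes the derivative of u_{ε,L} (taken to be 0 at the finitely many points where u_{ε,L} is not differentiable). Then N(1) = π/2, and for every real number s ≥ π/2 there exists ε ∈ (0,1] with N(ε) = s. -/

import Mathlib

open Real Set MeasureTheory intervalIntegral

lemma g_anti {L : ℝ} (hL : 1 < L) :
    StrictAntiOn (fun x => Real.cos x / Real.cos (x / L)) (Set.Ico 0 (π/2)) := by
  have hL0 : (0:ℝ) < L := by linarith
  apply strictAntiOn_of_deriv_neg (convex_Ico _ _)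
  · apply ContinuousOn.div (Real.continuous_cos.continuousOn)
      ((Real.continuous_cos.comp (continuous_id.div_const L)).continuousOn)
    intro x hx
    have hx1 : 0 ≤ x / L := div_nonneg hx.1 hL0.le
    have hx2 : x / L < π / 2 := lt_of_le_of_lt (by
      rw [div_le_iff₀ hL0]; nlinarith [hx.1]) hx.2
    exact (Real.cos_pos_of_mem_Ioo ⟨by linarith [Real.pi_pos], hx2⟩).ne'
  · intro x hx
    rw [interior_Ico] at hx
    obtain ⟨hx0, hx2⟩ := hx
    have hpi : 0 < π := Real.pi_pos
    have hxL0 : 0 ≤ x / L := div_nonneg hx0.le hL0.le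
    have hxLlt : x / L < x := by rw [div_lt_iff₀ hL0]; nlinarith
    have hc2 : 0 < Real.cos (x / L) :=
      Real.cos_pos_of_mem_Ioo ⟨by linarith, by linarith⟩
    have hc1 : 0 < Real.cos x := Real.cos_pos_of_mem_Ioo ⟨by linarith, hx2⟩
    have hcle : Real.cos x ≤ Real.cos (x / L) :=
      Real.cos_le_cos_of_nonneg_of_le_pi hxL0 (by linarith) hxLlt.le
    have hs2 : 0 ≤ Real.sin (x / L) := Real.sin_nonneg_of_nonneg_of_le_pi hxL0 (by linarith)
    have hslt : Real.sin (x / L) < Real.sin x :=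
      Real.strictMonoOn_sin ⟨by linarith, by linarith⟩ ⟨by linarith, by linarith⟩ hxLlt
    have hd2 : HasDerivAt (fun y => Real.cos (y / L)) (-Real.sin (x / L) * (1 / L)) x :=
      HasDerivAt.cos ((hasDerivAt_id x).div_const L)
    have hd : HasDerivAt (fun y => Real.cos y / Real.cos (y / L))
        ((-Real.sin x * Real.cos (x / L) - Real.cos x * (-Real.sin (x / L) * (1 / L))) /
          (Real.cos (x / L)) ^ 2) x :=
      (Real.hasDerivAt_cos x).div hd2 hc2.ne'
    rw [hd.deriv]
    apply div_neg_of_neg_of_pos _ (by positivity)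
    have h1L : 1 / L < 1 := by rw [div_lt_one hL0]; linarith
    have h1L0 : 0 < 1 / L := by positivity
    nlinarith [mul_nonneg hc1.le hs2, mul_le_mul_of_nonneg_right hcle hs2,
      (mul_lt_mul_iff_right₀ hc2).mpr hslt]

lemma deriv_min_left {L ε : ℝ} {s : Set ℝ} (hs : IsOpen s) {x : ℝ} (hx : x ∈ s)
    (h : ∀ y ∈ s, Real.cos (y / L) ≤ (1/ε) * Real.cos y) :
    deriv (fun y => min (Real.cos (y / L)) ((1/ε) * Real.cos y)) x
      = -Real.sin (x / L) * (1 / L) := by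
  have hev : (fun y => min (Real.cos (y / L)) ((1/ε) * Real.cos y))
      =ᶠ[nhds x] (fun y => Real.cos (y / L)) := by
    filter_upwards [hs.mem_nhds hx] with y hy
    exact min_eq_left (h y hy)
  rw [hev.deriv_eq]
  exact (HasDerivAt.cos ((hasDerivAt_id x).div_const L)).deriv

lemma deriv_min_right {L ε : ℝ} {s : Set ℝ} (hs : IsOpen s) {x : ℝ} (hx : x ∈ s)
    (h : ∀ y ∈ s, (1/ε) * Real.cos y ≤ Real.cos (y / L)) :
    deriv (fun y => min (Real.cos (y / L)) ((1/ε) * Real.cos y)) x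
      = (1/ε) * -Real.sin x := by
  have hev : (fun y => min (Real.cos (y / L)) ((1/ε) * Real.cos y))
      =ᶠ[nhds x] (fun y => (1/ε) * Real.cos y) := by
    filter_upwards [hs.mem_nhds hx] with y hy
    exact min_eq_right (h y hy)
  rw [hev.deriv_eq]
  simpa [mul_comm] using ((Real.hasDerivAt_cos x).const_mul (1/ε)).deriv

lemma ae_uIoc_of_forall_Ioo {a b : ℝ} {f g : ℝ → ℝ} (hab : a ≤ b)
    (h : ∀ x ∈ Set.Ioo a b, f x = g x) :
    ∀ᵐ x, x ∈ Set.uIoc a b → f x = g x := by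
  have h0 : (MeasureTheory.volume : Measure ℝ) {b} = 0 := Real.volume_singleton
  filter_upwards [MeasureTheory.measure_eq_zero_iff_ae_notMem.mp h0] with x hx hx'
  rw [Set.uIoc_of_le hab] at hx'
  exact h x ⟨hx'.1, lt_of_le_of_ne hx'.2 hx⟩

lemma key {L : ℝ} (hL : 1 < L) {c ε : ℝ} (hc0 : 0 ≤ c) (hc1 : c < π/2)
    (hε : ε = Real.cos c / Real.cos (c / L)) :
    (∫ x in (-(π/2))..(π/2),
      (deriv (fun y => min (Real.cos (y / L)) ((1/ε) * Real.cos y)) x)^2)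
      = c / L^2 - Real.sin (c/L) * Real.cos (c/L) / L
        + (1/ε^2) * (π/2 - c + Real.sin c * Real.cos c) := by
  have hL0 : (0:ℝ) < L := by linarith
  have hpi : 0 < π := Real.pi_pos
  have hcospos : ∀ y : ℝ, |y| < π/2 → 0 < Real.cos y := fun y hy =>
    Real.cos_pos_of_mem_Ioo ⟨(abs_lt.mp hy).1, (abs_lt.mp hy).2⟩
  have habsL : ∀ y : ℝ, |y / L| ≤ |y| := fun y => by
    rw [abs_div, abs_of_pos hL0]; exact div_le_self (abs_nonneg y) hL.le
  have hcosL : ∀ y : ℝ, Real.cos (y / L) = Real.cos (|y| / L) := fun y => by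
    rw [← Real.cos_abs (y / L), abs_div, abs_of_pos hL0]
  have hcc : 0 < Real.cos c := hcospos c (by rwa [abs_of_nonneg hc0])
  have hccL : 0 < Real.cos (c / L) :=
    hcospos _ (lt_of_le_of_lt (habsL c) (by rwa [abs_of_nonneg hc0]))
  have hε0 : 0 < ε := hε ▸ div_pos hcc hccL
  -- pointwise inequalities between the two branches
  have hkey : ∀ y : ℝ, |y| < π/2 →
      (|y| < c → Real.cos (y / L) ≤ (1/ε) * Real.cos y) ∧
      (c < |y| → (1/ε) * Real.cos y ≤ Real.cos (y / L)) := by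
    intro y hy
    have hyL : 0 < Real.cos (y / L) := hcospos _ (lt_of_le_of_lt (habsL y) hy)
    have hy0 : 0 < Real.cos y := hcospos y hy
    constructor
    · intro hyc
      have hlt : ε < Real.cos |y| / Real.cos (|y| / L) := by
        rw [hε]
        exact g_anti hL ⟨abs_nonneg y, by linarith⟩ ⟨hc0, hc1⟩ hyc
      rw [hcosL y] at hyL
      have h2 : ε * Real.cos (|y| / L) < Real.cos |y| := (lt_div_iff₀ hyL).mp hlt
      rw [hcosL y, one_div_mul_eq_div, le_div_iff₀ hε0]
      nlinarith [Real.cos_abs y]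
    · intro hyc
      have hlt : Real.cos |y| / Real.cos (|y| / L) < ε := by
        rw [hε]
        exact g_anti hL ⟨hc0, hc1⟩ ⟨abs_nonneg y, hy⟩ hyc
      rw [hcosL y] at hyL
      have h2 : Real.cos |y| < ε * Real.cos (|y| / L) := (div_lt_iff₀ hyL).mp hlt
      rw [hcosL y, one_div_mul_eq_div, div_le_iff₀ hε0]
      nlinarith [Real.cos_abs y]
  set F := fun y => min (Real.cos (y / L)) ((1/ε) * Real.cos y) with hF
  -- derivative values on open pieces
  have hDin : ∀ x ∈ Set.Ioo (-c) c, deriv F x = -Real.sin (x / L) * (1 / L) := by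
    intro x hx
    refine deriv_min_left isOpen_Ioo hx fun y hy => ?_
    have hyc : |y| < c := abs_lt.mpr ⟨hy.1, hy.2⟩
    exact (hkey y (by linarith)).1 hyc
  have hDR : ∀ x ∈ Set.Ioo c (π/2), deriv F x = (1/ε) * -Real.sin x := by
    intro x hx
    refine deriv_min_right isOpen_Ioo hx fun y hy => ?_
    have hy1 : |y| = y := abs_of_pos (lt_of_le_of_lt hc0 hy.1)
    exact (hkey y (by rw [hy1]; exact hy.2)).2 (by rw [hy1]; exact hy.1)
  have hDL : ∀ x ∈ Set.Ioo (-(π/2)) (-c), deriv F x = (1/ε) * -Real.sin x := by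
    intro x hx
    refine deriv_min_right isOpen_Ioo hx fun y hy => ?_
    have hy0 : y < 0 := lt_of_lt_of_le hy.2 (by linarith)
    have hy1 : |y| = -y := abs_of_neg hy0
    exact (hkey y (by rw [hy1]; linarith [hy.1])).2 (by rw [hy1]; linarith [hy.2])
  -- continuous model integrands
  set f1 : ℝ → ℝ := fun x => (-Real.sin (x / L) * (1 / L))^2 with hf1
  set f2 : ℝ → ℝ := fun x => ((1/ε) * -Real.sin x)^2 with hf2
  have hf1c : Continuous f1 := by fun_prop
  have hf2c : Continuous f2 := by fun_prop
  set D : ℝ → ℝ := fun x => (deriv F x)^2 with hD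
  -- a.e. equalities on the three pieces
  have haeIn : ∀ᵐ x, x ∈ Set.uIoc (-c) c → D x = f1 x :=
    ae_uIoc_of_forall_Ioo (by linarith) fun x hx => by rw [hD]; simp only []; rw [hDin x hx]
  have haeR : ∀ᵐ x, x ∈ Set.uIoc c (π/2) → D x = f2 x :=
    ae_uIoc_of_forall_Ioo (by linarith) fun x hx => by rw [hD]; simp only []; rw [hDR x hx]
  have haeL : ∀ᵐ x, x ∈ Set.uIoc (-(π/2)) (-c) → D x = f2 x :=
    ae_uIoc_of_forall_Ioo (by linarith) fun x hx => by rw [hD]; simp only []; rw [hDL x hx]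
  -- integrability
  have IIin : IntervalIntegrable D volume (-c) c :=
    (hf1c.intervalIntegrable _ _).congr_ae
      ((ae_restrict_iff' measurableSet_uIoc).mpr (haeIn.mono fun x h hx => (h hx).symm))
  have IIR : IntervalIntegrable D volume c (π/2) :=
    (hf2c.intervalIntegrable _ _).congr_ae
      ((ae_restrict_iff' measurableSet_uIoc).mpr (haeR.mono fun x h hx => (h hx).symm))
  have IIL : IntervalIntegrable D volume (-(π/2)) (-c) :=
    (hf2c.intervalIntegrable _ _).congr_ae
      ((ae_restrict_iff' measurableSet_uIoc).mpr (haeL.mono fun x h hx => (h hx).symm))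
  -- split the integral
  have hsplit : (∫ x in (-(π/2))..(π/2), D x)
      = (∫ x in (-(π/2))..(-c), D x) + (∫ x in (-c)..c, D x) + (∫ x in c..(π/2), D x) := by
    rw [add_assoc, intervalIntegral.integral_add_adjacent_intervals IIin IIR,
      intervalIntegral.integral_add_adjacent_intervals IIL (IIin.trans IIR)]
  -- compute each piece
  have hIn : (∫ x in (-c)..c, D x) = c / L^2 - Real.sin (c/L) * Real.cos (c/L) / L := by
    rw [intervalIntegral.integral_congr_ae haeIn]
    have : ∀ x : ℝ, f1 x = (fun t => Real.sin t ^ 2) (x / L) * (1/L)^2 := by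
      intro x; rw [hf1]; ring
    simp only [this]
    rw [intervalIntegral.integral_mul_const]
    have hcomp : (∫ x in (-c)..c, Real.sin (x / L) ^ 2)
        = L * ((Real.sin (-c / L) * Real.cos (-c / L)
            - Real.sin (c / L) * Real.cos (c / L) + c / L - -c / L) / 2) := by
      have h := intervalIntegral.integral_comp_div (a := -c) (b := c) (c := L)
        (fun t => Real.sin t ^ 2) hL0.ne'
      simpa [integral_sin_sq] using h
    rw [hcomp]
    simp only [neg_div, Real.sin_neg, Real.cos_neg, smul_eq_mul]
    field_simp
    ring
  have hR : (∫ x in c..(π/2), D x)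
      = (1/ε^2) * ((π/2 - c + Real.sin c * Real.cos c) / 2) := by
    rw [intervalIntegral.integral_congr_ae haeR]
    have : ∀ x : ℝ, f2 x = Real.sin x ^ 2 * (1/ε)^2 := by
      intro x; rw [hf2]; ring
    simp only [this]
    rw [intervalIntegral.integral_mul_const, integral_sin_sq]
    rw [Real.sin_pi_div_two, Real.cos_pi_div_two]
    field_simp
    ring
  have hLe : (∫ x in (-(π/2))..(-c), D x)
      = (1/ε^2) * ((π/2 - c + Real.sin c * Real.cos c) / 2) := by
    rw [intervalIntegral.integral_congr_ae haeL]
    have : ∀ x : ℝ, f2 x = Real.sin x ^ 2 * (1/ε)^2 := by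
      intro x; rw [hf2]; ring
    simp only [this]
    rw [intervalIntegral.integral_mul_const, integral_sin_sq]
    simp only [Real.sin_neg, Real.cos_neg, Real.sin_pi_div_two, Real.cos_pi_div_two]
    field_simp
    ring
  calc (∫ x in (-(π/2))..(π/2), D x)
      = (∫ x in (-(π/2))..(-c), D x) + (∫ x in (-c)..c, D x) + (∫ x in c..(π/2), D x) := hsplit
    _ = c / L^2 - Real.sin (c/L) * Real.cos (c/L) / L
        + (1/ε^2) * (π/2 - c + Real.sin c * Real.cos c) := by
        rw [hIn, hR, hLe]; ring

set_option maxHeartbeats 1000000 in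
/-- For `L > 1`, the squared `H¹₀`-norm `N(ε)` of
`u_{ε,L}(x) = min(cos(x/L), (1/ε)·cos x)` satisfies `N(1) = π/2` and attains
every value `s ≥ π/2` for some `ε ∈ (0,1]`. -/
theorem stmt_10 (L : ℝ) (hL : 1 < L) (N : ℝ → ℝ)
    (hN : N = fun ε => ∫ x in (-(π / 2))..(π / 2),
      (deriv (fun y => min (Real.cos (y / L)) ((1 / ε) * Real.cos y)) x) ^ 2) :
    N 1 = π / 2 ∧ ∀ s : ℝ, π / 2 ≤ s → ∃ ε ∈ Set.Ioc (0 : ℝ) 1, N ε = s := by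
  have hL0 : (0:ℝ) < L := by linarith
  have hpi : 0 < π := Real.pi_pos
  have hpi3 : 3 < π := by linarith [Real.pi_gt_three]
  constructor
  · rw [hN]
    simp only []
    rw [key (c := 0) (ε := 1) hL le_rfl (by positivity) (by norm_num)]
    norm_num
  · intro s hs
    -- the value function parametrized by the crossing point c
    set F : ℝ → ℝ := fun c => c / L^2 - Real.sin (c/L) * Real.cos (c/L) / L
        + (Real.cos (c/L) / Real.cos c)^2 * (π/2 - c + Real.sin c * Real.cos c) with hFdef
    clear_value F
    set k : ℝ := Real.cos (π / 2 / L) with hkdef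
    clear_value k
    have hk0 : 0 < k := by
      rw [hkdef]
      apply Real.cos_pos_of_mem_Ioo
      constructor
      · have : 0 < π / 2 / L := by positivity
        linarith
      · rw [div_lt_iff₀ hL0]; nlinarith
    have hk1 : k ≤ 1 := by rw [hkdef]; exact Real.cos_le_one _
    have hs1 : 0 < s + 1 := by linarith
    set c₁ : ℝ := π/2 - k^2/(s+1) with hc₁def
    clear_value c₁
    have hd0 : 0 < k^2/(s+1) := by positivity
    have hc₁lt : c₁ < π/2 := by rw [hc₁def]; linarith
    have hc₁pos : 0 < c₁ := by
      have h1 : k^2/(s+1) ≤ 1 := by rw [div_le_one hs1]; nlinarith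
      rw [hc₁def]; linarith
    -- positivity of cosines on [0, π/2)
    have hcos : ∀ c : ℝ, 0 ≤ c → c < π/2 → 0 < Real.cos c ∧ 0 < Real.cos (c/L) ∧
        Real.cos c ≤ Real.cos (c/L) := by
      intro c h0 h1
      have hcL0 : 0 ≤ c / L := by positivity
      have hcL1 : c / L ≤ c := div_le_self h0 hL.le
      refine ⟨Real.cos_pos_of_mem_Ioo ⟨by linarith, h1⟩,
        Real.cos_pos_of_mem_Ioo ⟨by linarith, by linarith⟩, ?_⟩
      exact Real.cos_le_cos_of_nonneg_of_le_pi hcL0 (by linarith) hcL1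
    -- lower bound at c₁
    have hFlb : s ≤ F c₁ := by
      obtain ⟨hcc, hccL, hcle⟩ := hcos c₁ hc₁pos.le hc₁lt
      have hkle : k ≤ Real.cos (c₁/L) := by
        rw [hkdef]
        have h1 : 0 ≤ c₁ / L := div_nonneg hc₁pos.le hL0.le
        have h2 : π/2/L ≤ π := by
          rw [div_le_iff₀ hL0]; nlinarith [mul_pos hpi (sub_pos.mpr hL)]
        have h3 : c₁ / L ≤ π/2/L := (div_le_div_iff_of_pos_right hL0).mpr hc₁lt.le
        exact Real.cos_le_cos_of_nonneg_of_le_pi h1 h2 h3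
      have hcosle : Real.cos c₁ ≤ π/2 - c₁ := by
        rw [← Real.sin_pi_div_two_sub]
        exact Real.sin_le (by linarith)
      have hsc : 0 ≤ Real.sin c₁ * Real.cos c₁ :=
        mul_nonneg (Real.sin_nonneg_of_nonneg_of_le_pi hc₁pos.le (by linarith)) hcc.le
      have hb2 : Real.sin (c₁/L) * Real.cos (c₁/L) / L ≤ 1 := by
        rw [div_le_one hL0]
        nlinarith [Real.sin_le_one (c₁/L), Real.cos_le_one (c₁/L),
          Real.sin_nonneg_of_nonneg_of_le_pi (div_nonneg hc₁pos.le hL0.le)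
            (by rw [div_le_iff₀ hL0]; nlinarith [mul_pos hpi (sub_pos.mpr hL)]), hccL]
      have hd : π/2 - c₁ = k^2/(s+1) := by rw [hc₁def]; ring
      have hb3 : s + 1 ≤ (Real.cos (c₁/L) / Real.cos c₁)^2 * (π/2 - c₁ + Real.sin c₁ * Real.cos c₁) := by
        have h1 : s + 1 = k^2 / (π/2 - c₁) := by rw [hd]; field_simp
        have hdpos : 0 < π/2 - c₁ := lt_of_lt_of_le hcc hcosle
        rw [h1, div_pow, div_mul_eq_mul_div, div_le_div_iff₀ (by linarith) (by positivity)]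
        have h4 : k^2 ≤ Real.cos (c₁/L)^2 := pow_le_pow_left₀ hk0.le hkle 2
        have h5 : Real.cos c₁^2 ≤ (π/2 - c₁)^2 := pow_le_pow_left₀ hcc.le hcosle 2
        nlinarith [mul_le_mul_of_nonneg_right h4 (sq_nonneg (Real.cos c₁)),
          mul_le_mul_of_nonneg_left h5 (sq_nonneg (Real.cos (c₁/L))),
          mul_nonneg (mul_nonneg (sq_nonneg (Real.cos (c₁/L))) hsc) hdpos.le]
      have hb1 : 0 ≤ c₁ / L^2 := by positivity
      rw [hFdef]
      simp only []
      nlinarith [hb1, hb2, hb3]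
    have hF0 : F 0 = π/2 := by
      rw [hFdef]
      norm_num
    -- continuity
    have hden : ∀ x ∈ Set.Icc 0 c₁, Real.cos x ≠ 0 := fun x hx =>
      (hcos x hx.1 (lt_of_le_of_lt hx.2 hc₁lt)).1.ne'
    have hq : ContinuousOn (fun c : ℝ => Real.cos (c/L) / Real.cos c) (Set.Icc 0 c₁) :=
      ContinuousOn.div ((Real.continuous_cos.comp (continuous_id.div_const L)).continuousOn)
        (Real.continuous_cos.continuousOn) hden
    have hFcont : ContinuousOn F (Set.Icc 0 c₁) := by
      rw [hFdef]
      exact ((show Continuous (fun c : ℝ => c / L^2 - Real.sin (c/L) * Real.cos (c/L) / L)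
          by fun_prop).continuousOn).add ((hq.pow 2).mul
        (show Continuous (fun c : ℝ => π/2 - c + Real.sin c * Real.cos c)
          by fun_prop).continuousOn)
    have hmem : s ∈ Set.Icc (F 0) (F c₁) := by rw [hF0]; exact ⟨hs, hFlb⟩
    obtain ⟨c, hcmem, hFc⟩ := intermediate_value_Icc hc₁pos.le hFcont hmem
    have hc0 : 0 ≤ c := hcmem.1
    have hc1 : c < π/2 := lt_of_le_of_lt hcmem.2 hc₁lt
    obtain ⟨hcc, hccL, hcle⟩ := hcos c hc0 hc1
    refine ⟨Real.cos c / Real.cos (c/L), ⟨div_pos hcc hccL, (div_le_one hccL).mpr hcle⟩, ?_⟩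
    rw [hN]
    simp only []
    rw [key hL hc0 hc1 rfl]
    have h1ε : 1/(Real.cos c / Real.cos (c/L))^2 = (Real.cos (c/L) / Real.cos c)^2 := by
      rw [div_pow, one_div_div, div_pow]
    rw [h1ε]
    rw [hFdef] at hFc
    simpa using hFc
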